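/- For every k ≥ 5, there exists a tournament on 2^(k-1) vertices that contains no k-th power of a directed path on k(k+1)/2 vertices. Equivalently, ℓ_k(2^(k-1)) < k(k+1)/2. -/

import Mathlib

/-- A tournament: irreflexive, and exactly one direction between distinct vertices. -/
def IsTournament {V : Type*} (T : V → V → Prop) : Prop :=
  (∀ v : V, ¬ T v v) ∧ ∀ u v : V, u ≠ v → (T u v ↔ ¬ T v u)

/-- `T` contains the k-th power of a directed path on `L` vertices. -/
def ContainsPathPower {V : Type*} (T : V → V → Prop) (k L : ℕ) : Prop :=
  ∃ v : Fin L → V, Function.Injective v ∧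
    ∀ i j : Fin L, (i : ℕ) < (j : ℕ) → (j : ℕ) ≤ (i : ℕ) + k → T (v i) (v j)
/-- `pathPowerNum k n` is the largest `L` such that every `n`-vertex tournament
contains the k-th power of a directed path on `L` vertices. -/
noncomputable def pathPowerNum (k n : ℕ) : ℕ :=
  sSup {L | ∀ T : Fin n → Fin n → Prop, IsTournament T → ContainsPathPower T k L}

open Finset

lemma cpp_mono {V : Type*} {T : V → V → Prop} {k L L' : ℕ} (h : L' ≤ L)
    (hC : ContainsPathPower T k L) : ContainsPathPower T k L' := by
  obtain ⟨v, hv, hvT⟩ := hC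
  refine ⟨fun i => v (Fin.castLE h i), fun a b hab => ?_, fun i j hij hjk => ?_⟩
  · exact Fin.castLE_injective h (hv hab)
  · exact hvT _ _ (by simpa using hij) (by simpa using hjk)

lemma cpp_zero {V : Type*} (T : V → V → Prop) (k : ℕ) : ContainsPathPower T k 0 :=
  ⟨Fin.elim0, fun a => a.elim0, fun i => i.elim0⟩

/-- The set of constrained index pairs in a `k`-th power of a path on `L` vertices. -/
def PF (k L : ℕ) : Finset (Fin L × Fin L) :=
  Finset.univ.filter (fun p => (p.1 : ℕ) < (p.2 : ℕ) ∧ (p.2 : ℕ) ≤ (p.1 : ℕ) + k)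

lemma card_PF {k L : ℕ} (hkL : k ≤ L) :
    (PF k L).card = (∑ j ∈ range k, j) + (L - k) * k := by
  have hfib : ∀ j : Fin L,
      ((PF k L).filter (fun p => p.2 = j)).card = min (j : ℕ) k := by
    intro j
    have hcard : ((PF k L).filter (fun p => p.2 = j)).card
        = (Finset.Ico ((j : ℕ) - k) (j : ℕ)).card := by
      refine Finset.card_bij' (fun p _ => (p.1 : ℕ))
        (fun a ha => (⟨a, lt_trans (Finset.mem_Ico.1 ha).2 j.isLt⟩, j)) ?_ ?_ ?_ ?_
      · intro p hp
        simp only [PF, Finset.mem_filter, Finset.mem_univ, true_and] at hp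
        obtain ⟨⟨h1, h2⟩, h3⟩ := hp
        subst h3
        show (p.1 : ℕ) ∈ Finset.Ico ((p.2 : ℕ) - k) (p.2 : ℕ)
        exact Finset.mem_Ico.2 ⟨by omega, h1⟩
      · intro a ha
        obtain ⟨ha1, ha2⟩ := Finset.mem_Ico.1 ha
        refine Finset.mem_filter.2 ⟨Finset.mem_filter.2 ⟨Finset.mem_univ _, ?_, ?_⟩, rfl⟩
        · exact ha2
        · show (j : ℕ) ≤ a + k
          omega
      · intro p hp
        simp only [PF, Finset.mem_filter, Finset.mem_univ, true_and] at hp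
        obtain ⟨⟨h1, h2⟩, h3⟩ := hp
        refine Prod.ext ?_ ?_
        · exact Fin.ext rfl
        · exact h3.symm
      · intro a ha; rfl
    rw [hcard, Nat.card_Ico]
    omega
  have h1 : (PF k L).card = ∑ j : Fin L, ((PF k L).filter (fun p => p.2 = j)).card :=
    Finset.card_eq_sum_card_fiberwise (fun x _ => Finset.mem_univ _)
  rw [h1]
  have h2 : ∑ j : Fin L, ((PF k L).filter (fun p => p.2 = j)).card
      = ∑ j : Fin L, min (j : ℕ) k := by
    exact Finset.sum_congr rfl (fun j _ => hfib j)
  rw [h2]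
  rw [Fin.sum_univ_eq_sum_range (fun j => min j k) L]
  have h3 : ∑ j ∈ range L, min j k
      = (∑ j ∈ Finset.Ico 0 k, min j k) + ∑ j ∈ Finset.Ico k L, min j k := by
    rw [Finset.sum_Ico_consecutive _ (Nat.zero_le k) hkL, ← Finset.range_eq_Ico]
  rw [h3]
  congr 1
  · rw [← Finset.range_eq_Ico]
    exact Finset.sum_congr rfl (fun j hj => by
      rw [Finset.mem_range] at hj; omega)
  · have : ∀ j ∈ Finset.Ico k L, min j k = k := by
      intro j hj
      rw [Finset.mem_Ico] at hj; omega
    rw [Finset.sum_congr rfl this, Finset.sum_const, Nat.card_Ico, smul_eq_mul]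

lemma descFactorial_lt_pow {n : ℕ} (hn : 1 ≤ n) {L : ℕ} (hL : 2 ≤ L) :
    n.descFactorial L < n ^ L := by
  obtain ⟨m, rfl⟩ : ∃ m, L = m + 2 := ⟨L - 2, by omega⟩
  calc n.descFactorial (m + 2) = (n - (m + 1)) * n.descFactorial (m + 1) := rfl
    _ ≤ (n - 1) * n ^ (m + 1) :=
        Nat.mul_le_mul (by omega) (Nat.descFactorial_le_pow _ _)
    _ < n * n ^ (m + 1) := by
        have hpos : 0 < n ^ (m + 1) := Nat.pow_pos (by omega)
        exact Nat.mul_lt_mul_of_lt_of_le (by omega) le_rfl hpos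
    _ = n ^ (m + 2) := by ring

/-- Counting argument: if the number of embeddings is less than `2 ^ |PF k L|`,
some tournament on `Fin n` contains no `k`-th power of a path on `L` vertices. -/
lemma exists_no_pathPower (n k L : ℕ)
    (hdesc : n.descFactorial L < 2 ^ (PF k L).card) :
    ∃ T : Fin n → Fin n → Prop, IsTournament T ∧ ¬ ContainsPathPower T k L := by
  classical
  by_contra hcon
  push_neg at hcon
  set N := n * n with hN
  set cP := (PF k L).card with hcP
  let Ω := Fin n × Fin n → Bool
  let Tf : Ω → Fin n → Fin n → Prop := fun f u v =>
    if u < v then f (u, v) = true else if v < u then f (v, u) = false else False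
  have htour : ∀ f, IsTournament (Tf f) := by
    intro f
    constructor
    · intro v; simp [Tf]
    · intro u v huv
      rcases lt_or_gt_of_ne huv with h | h
      · have h' : ¬ v < u := asymm h
        simp [Tf, h, h']
      · have h' : ¬ u < v := asymm h
        simp [Tf, h, h']
  have hall : ∀ f : Ω, ContainsPathPower (Tf f) k L := fun f => hcon _ (htour f)
  let A : (Fin L ↪ Fin n) → Finset Ω := fun e =>
    Finset.univ.filter (fun f => ∀ i j : Fin L,
      (i : ℕ) < (j : ℕ) → (j : ℕ) ≤ (i : ℕ) + k → Tf f (e i) (e j))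
  have hcover : (Finset.univ : Finset Ω) ⊆ Finset.univ.biUnion A := by
    intro f _
    obtain ⟨v, hv, hcond⟩ := hall f
    exact Finset.mem_biUnion.2 ⟨⟨v, hv⟩, Finset.mem_univ _,
      Finset.mem_filter.2 ⟨Finset.mem_univ _, hcond⟩⟩
  let edgeOf : Fin n → Fin n → Fin n × Fin n := fun a b => if a < b then (a, b) else (b, a)
  let S : (Fin L ↪ Fin n) → Finset (Fin n × Fin n) := fun e =>
    (PF k L).image (fun p => edgeOf (e p.1) (e p.2))
  have hScard : ∀ e, (S e).card = cP := by
    intro e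
    refine Finset.card_image_of_injOn ?_
    intro p hp q hq hpq
    simp only [Finset.mem_coe, PF, Finset.mem_filter, Finset.mem_univ, true_and] at hp hq
    obtain ⟨hp1, hp2⟩ := hp
    obtain ⟨hq1, hq2⟩ := hq
    by_cases h1 : e p.1 < e p.2 <;> by_cases h2 : e q.1 < e q.2 <;>
      simp only [edgeOf, h1, h2, if_true, if_false, Prod.mk.injEq] at hpq <;>
      [skip; skip; skip; skip]
    · obtain ⟨ha, hb⟩ := hpq
      have := e.injective ha; have := e.injective hb
      exact Prod.ext (e.injective ha) (e.injective hb)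
    · obtain ⟨ha, hb⟩ := hpq
      have h3 : p.1 = q.2 := e.injective ha
      have h4 : p.2 = q.1 := e.injective hb
      have : (p.1 : ℕ) = (q.2 : ℕ) := by rw [h3]
      have : (p.2 : ℕ) = (q.1 : ℕ) := by rw [h4]
      omega
    · obtain ⟨ha, hb⟩ := hpq
      have h3 : p.2 = q.1 := e.injective ha
      have h4 : p.1 = q.2 := e.injective hb
      have : (p.2 : ℕ) = (q.1 : ℕ) := by rw [h3]
      have : (p.1 : ℕ) = (q.2 : ℕ) := by rw [h4]
      omega
    · obtain ⟨ha, hb⟩ := hpq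
      exact Prod.ext (e.injective hb) (e.injective ha)
  have hA : ∀ e, (A e).card ≤ 2 ^ (N - cP) := by
    intro e
    have hinj : Set.InjOn (fun (f : Ω) (x : ((S e)ᶜ : Finset (Fin n × Fin n))) => f x.1)
        ↑(A e) := by
      intro f hf g hg hfg
      simp only [Finset.mem_coe, A, Finset.mem_filter, Finset.mem_univ, true_and] at hf hg
      funext p
      by_cases hp : p ∈ (S e)ᶜ
      · exact congrFun hfg ⟨p, hp⟩
      · have hpS : p ∈ S e := by
          by_contra hns
          exact hp (Finset.mem_compl.2 hns)
        obtain ⟨q, hq, hedge⟩ := Finset.mem_image.1 hpS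
        simp only [PF, Finset.mem_filter, Finset.mem_univ, true_and] at hq
        obtain ⟨hq1, hq2⟩ := hq
        have hTf : Tf f (e q.1) (e q.2) := hf q.1 q.2 hq1 hq2
        have hTg : Tf g (e q.1) (e q.2) := hg q.1 q.2 hq1 hq2
        by_cases hlt : e q.1 < e q.2
        · have hpeq : p = (e q.1, e q.2) := by
            rw [← hedge]; simp [edgeOf, hlt]
          simp only [Tf, hlt, if_true] at hTf hTg
          rw [hpeq, hTf, hTg]
        · have hne : e q.1 ≠ e q.2 := by
            intro hcontra
            have := e.injective hcontra
            have : (q.1 : ℕ) = (q.2 : ℕ) := by rw [this]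
            omega
          have hlt' : e q.2 < e q.1 := by
            rcases lt_or_gt_of_ne hne with h | h
            · exact absurd h hlt
            · exact h
          have hpeq : p = (e q.2, e q.1) := by
            rw [← hedge]; simp [edgeOf, hlt]
          simp only [Tf, hlt, if_false, hlt', if_true] at hTf hTg
          rw [hpeq]
          rw [hTf, hTg]
    have hle := Finset.card_le_card_of_injOn _ (fun a _ => Finset.mem_univ _) hinj
    calc (A e).card ≤ (Finset.univ :
          Finset (((S e)ᶜ : Finset (Fin n × Fin n)) → Bool)).card := hle
      _ = 2 ^ (N - cP) := by
          rw [Finset.card_univ, Fintype.card_fun, Fintype.card_coe, Finset.card_compl,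
            hScard e, Fintype.card_prod, Fintype.card_fin, Fintype.card_bool]
  -- an embedding exists, giving cP ≤ N
  obtain ⟨v0, hv0, -⟩ := hall (fun _ => true)
  have hPN : cP ≤ N := by
    rw [← hScard ⟨v0, hv0⟩]
    calc (S ⟨v0, hv0⟩).card ≤ Fintype.card (Fin n × Fin n) := Finset.card_le_univ _
      _ = N := by rw [Fintype.card_prod, Fintype.card_fin]
  have h1 : (2 : ℕ) ^ N ≤ n.descFactorial L * 2 ^ (N - cP) := by
    have hcardΩ : (Finset.univ : Finset Ω).card = 2 ^ N := by
      rw [Finset.card_univ]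
      show Fintype.card (Fin n × Fin n → Bool) = 2 ^ N
      rw [Fintype.card_fun, Fintype.card_prod, Fintype.card_fin, Fintype.card_bool]
    calc (2 : ℕ) ^ N = (Finset.univ : Finset Ω).card := hcardΩ.symm
      _ ≤ (Finset.univ.biUnion A).card := Finset.card_le_card hcover
      _ ≤ ∑ e : Fin L ↪ Fin n, (A e).card := Finset.card_biUnion_le
      _ ≤ (Finset.univ : Finset (Fin L ↪ Fin n)).card • (2 ^ (N - cP)) :=
          Finset.sum_le_card_nsmul _ _ _ (fun e _ => hA e)
      _ = n.descFactorial L * 2 ^ (N - cP) := by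
          rw [smul_eq_mul, Finset.card_univ, Fintype.card_embedding_eq,
            Fintype.card_fin, Fintype.card_fin]
  have h2 : n.descFactorial L * 2 ^ (N - cP) < 2 ^ N := by
    calc n.descFactorial L * 2 ^ (N - cP) < 2 ^ cP * 2 ^ (N - cP) := by
          have hpos : 0 < 2 ^ (N - cP) := Nat.pow_pos (by omega)
          exact Nat.mul_lt_mul_of_lt_of_le hdesc le_rfl hpos
      _ = 2 ^ N := by rw [← pow_add]; congr 1; omega
  omega

theorem small_tournament_construction {k : ℕ} (hk : 5 ≤ k) :
    (∃ T : Fin (2 ^ (k - 1)) → Fin (2 ^ (k - 1)) → Prop,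
      IsTournament T ∧ ¬ ContainsPathPower T k (k * (k + 1) / 2)) ∧
    pathPowerNum k (2 ^ (k - 1)) < k * (k + 1) / 2 := by
  set n := 2 ^ (k - 1) with hn
  set L := k * (k + 1) / 2 with hLdef
  -- arithmetic facts
  have hdvd : 2 ∣ k * (k + 1) := (Nat.even_mul_succ_self k).two_dvd
  have hev : 2 * L = k * (k + 1) := by
    rw [hLdef]; exact Nat.mul_div_cancel' hdvd
  have hkk : k * (k + 1) = k * k + k := by ring
  have hkk2 : k ≤ k * k := Nat.le_mul_of_pos_left k (by omega)
  have hkL : k ≤ L := by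
    have h25 : 5 * 5 ≤ k * k := Nat.mul_le_mul hk hk
    nlinarith [hev, hkk, hkk2]
  have hL2 : 2 ≤ L := by
    have h25 : 5 * 5 ≤ k * k := Nat.mul_le_mul hk hk
    nlinarith [hev, hkk]
  have hGauss : (∑ j ∈ range k, j) * 2 = k * (k - 1) := Finset.sum_range_id_mul_two k
  have hPF_ge : (k - 1) * L ≤ (PF k L).card := by
    rw [card_PF hkL]
    obtain ⟨K, rfl⟩ : ∃ K, k = K + 1 := ⟨k - 1, by omega⟩
    obtain ⟨M, hM⟩ : ∃ M, L = (K + 1) + M := ⟨L - (K + 1), by omega⟩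
    have hsub1 : (K + 1) - 1 = K := by omega
    have hsub2 : L - (K + 1) = M := by omega
    rw [hsub1, hsub2]
    have hG2 : (∑ j ∈ range (K + 1), j) * 2 = (K + 1) * K := by
      rw [hGauss, Nat.add_sub_cancel]
    have h2M : 2 * M = K * K + K := by nlinarith [hev, hM]
    nlinarith [hG2, h2M, hM]
  have hn1 : 1 ≤ n := Nat.one_le_two_pow
  have hdesc : n.descFactorial L < 2 ^ (PF k L).card := by
    calc n.descFactorial L < n ^ L := descFactorial_lt_pow hn1 hL2
      _ = 2 ^ ((k - 1) * L) := by rw [hn, ← pow_mul]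
      _ ≤ 2 ^ (PF k L).card := Nat.pow_le_pow_right (by omega) hPF_ge
  obtain ⟨T, hT, hnT⟩ := exists_no_pathPower n k L hdesc
  refine ⟨⟨T, hT, hnT⟩, ?_⟩
  have hL1 : 1 ≤ L := by omega
  have hsup : pathPowerNum k n ≤ L - 1 := by
    apply csSup_le
    · exact ⟨0, fun T' hT' => cpp_zero T' k⟩
    · intro b hb
      by_contra hbL
      push_neg at hbL
      exact hnT (cpp_mono (by omega) (hb T hT))
  omega
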